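/- For every tree T_n on n ≥ 2 vertices and every integer m ≥ 2, R(T_n, K_m) = (n−1)(m−1) + 1. -/

import Mathlib

open SimpleGraph Finset

/-- `G` embeds into `H` (a copy of `G` appears in `H`). -/
def graphEmbeds {V W : Type*} (G : SimpleGraph V) (H : SimpleGraph W) : Prop :=
  ∃ f : V → W, Function.Injective f ∧ ∀ u v, G.Adj u v → H.Adj (f u) (f v)

/-- `N` is large enough for the Ramsey property: every red/blue coloring of `K_N`
(the red graph `R`, blue graph `Rᶜ`) contains a red `G` or a blue `H`. -/
def isRamsey {V W : Type*} (G : SimpleGraph V) (H : SimpleGraph W) (N : ℕ) : Prop :=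
  ∀ R : SimpleGraph (Fin N), graphEmbeds G R ∨ graphEmbeds H Rᶜ

/-- The Ramsey number `R(G,H)`. -/
noncomputable def ramsey {V W : Type*} (G : SimpleGraph V) (H : SimpleGraph W) : ℕ :=
  sInf {N | isRamsey G H N}

/-- `t` disjoint copies of the complete graph `K_m`. -/
def kCliques (t m : ℕ) : SimpleGraph (Fin t × Fin m) where
  Adj x y := x.1 = y.1 ∧ x.2 ≠ y.2
  symm := ⟨fun x y h => ⟨h.1.symm, h.2.symm⟩⟩
  loopless := ⟨fun x h => h.2 rfl⟩

/-- The chromatic number as a natural number. -/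
noncomputable def chromNum {V : Type*} (G : SimpleGraph V) : ℕ := sInf {n | G.Colorable n}

/-- The chromatic surplus: the minimum size of a color class over all proper
colorings with `chromNum G` colors. -/
noncomputable def surplus {V : Type*} [Fintype V] (G : SimpleGraph V) : ℕ :=
  sInf {k | ∃ C : G.Coloring (Fin (chromNum G)), ∃ i : Fin (chromNum G),
    (Finset.univ.filter (fun v => C v = i)).card = k}

/-- `a` is a leaf of `G`: it has a unique neighbor. -/
def IsLeaf {V : Type*} (G : SimpleGraph V) (a : V) : Prop := ∃! w, G.Adj a w

/-- Stretching: delete a leaf `b` and attach a new vertex (reusing the label `b`)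
to the leaf `a`. -/
def isStretch {V : Type*} (T T' : SimpleGraph V) : Prop :=
  ∃ a b : V, a ≠ b ∧ IsLeaf T a ∧ IsLeaf T b ∧
    ∀ x y, T'.Adj x y ↔
      ((T.Adj x y ∧ x ≠ b ∧ y ≠ b) ∨ (x = b ∧ y = a) ∨ (x = a ∧ y = b))

/-- Expanding at a vertex `u` of degree `d` (`2 ≤ d ≤ n-2`) all of whose neighbors
are leaves except `z0`: delete a leaf `b` outside `N[u]` and attach a new vertex
(reusing the label `b`) to `u`. -/
def isExpand {V : Type*} [Fintype V] (T T' : SimpleGraph V) : Prop :=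
  ∃ u b z0 : V, T.Adj u z0 ∧ ¬ IsLeaf T z0 ∧
    (∀ z, T.Adj u z → z ≠ z0 → IsLeaf T z) ∧
    2 ≤ (T.neighborSet u).ncard ∧ (T.neighborSet u).ncard ≤ Fintype.card V - 2 ∧
    IsLeaf T b ∧ b ≠ u ∧ ¬ T.Adj u b ∧
    ∀ x y, T'.Adj x y ↔
      ((T.Adj x y ∧ x ≠ b ∧ y ≠ b) ∨ (x = b ∧ y = u) ∨ (x = u ∧ y = b))

/-- Disjoint union of `K_m` and `K_l`. -/
def kUnion (m l : ℕ) : SimpleGraph (Fin m ⊕ Fin l) where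
  Adj x y := x ≠ y ∧ ((x.isLeft ∧ y.isLeft) ∨ (x.isRight ∧ y.isRight))
  symm := ⟨fun x y h => ⟨h.1.symm, h.2.imp (fun p => ⟨p.2, p.1⟩) (fun p => ⟨p.2, p.1⟩)⟩⟩
  loopless := ⟨fun x h => h.1 rfl⟩

/-- Disjoint union of `k` graphs, each on `Fin n`. -/
def disjUnion {k n : ℕ} (Fs : Fin k → SimpleGraph (Fin n)) :
    SimpleGraph (Fin k × Fin n) where
  Adj x y := x.1 = y.1 ∧ (Fs x.1).Adj x.2 y.2
  symm := by
    refine ⟨?_⟩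
    rintro ⟨i, a⟩ ⟨j, b⟩ ⟨h1, h2⟩
    dsimp at h1 h2 ⊢
    subst h1
    exact ⟨rfl, h2.symm⟩
  loopless := by
    refine ⟨?_⟩
    rintro ⟨i, a⟩ ⟨h1, h2⟩
    exact (Fs i).irrefl (v := a) h2

/-- Disjoint union of graphs `Fs i` on `Fin (n i)`. -/
def sigmaUnion {r : ℕ} {n : Fin r → ℕ} (Fs : ∀ i, SimpleGraph (Fin (n i))) :
    SimpleGraph (Σ i, Fin (n i)) where
  Adj x y := ∃ (i : Fin r) (a b : Fin (n i)), x = ⟨i, a⟩ ∧ y = ⟨i, b⟩ ∧ (Fs i).Adj a b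
  symm := by
    refine ⟨?_⟩
    rintro x y ⟨i, a, b, hx, hy, h⟩
    exact ⟨i, b, a, hy, hx, h.symm⟩
  loopless := by
    refine ⟨?_⟩
    rintro x ⟨i, a, b, hx, hy, h⟩
    rw [hx] at hy
    obtain ⟨-, hab⟩ := (Sigma.mk.inj_iff).mp hy
    exact (Fs i).irrefl (v := a) (by cases eq_of_heq hab; exact h)

lemma internal_two_nbrs {V : Type*} {G : SimpleGraph V} {x : V} {u v : V}
    (p : G.Walk u v) (hp : p.IsPath) (hx : x ∈ p.support) (hu : x ≠ u) (hv : x ≠ v) :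
    ∃ a b, a ≠ b ∧ G.Adj x a ∧ G.Adj x b := by
  induction p with
  | nil => simp at hx; exact absurd hx hu
  | @cons u' w' v' h q ih =>
    have hq : x ∈ q.support := by
      rcases (SimpleGraph.Walk.mem_support_iff _).mp hx with h1 | h1
      · exact absurd h1 hu
      · exact h1
    by_cases hxw : x = w'
    · subst hxw
      rw [SimpleGraph.Walk.cons_isPath_iff] at hp
      have hnil := SimpleGraph.Walk.not_nil_of_ne hv (p := q)
      have hlen : 1 ≤ q.length := by
        have := (SimpleGraph.Walk.not_nil_iff_lt_length).mp hnil; omega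
      refine ⟨u', q.getVert 1, ?_, h.symm, q.adj_snd hnil⟩
      intro he
      exact hp.2 (he ▸ (SimpleGraph.Walk.mem_support_iff_exists_getVert.mpr ⟨1, rfl, hlen⟩))
    · exact ih hp.of_cons hq hxw hv

lemma tree_exists_leaf {V : Type*} [Fintype V] {T : SimpleGraph V} [DecidableRel T.Adj]
    (hT : T.IsTree) (h2 : 2 ≤ Fintype.card V) : ∃ x, T.degree x = 1 := by
  by_contra hc
  push_neg at hc
  have hpos : ∀ v, 1 ≤ T.degree v := by
    intro v
    obtain ⟨w, hw⟩ := Fintype.exists_ne_of_one_lt_card (by omega) v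
    obtain ⟨p⟩ := hT.isConnected.preconnected v w
    have hnil : ¬ p.Nil := SimpleGraph.Walk.not_nil_of_ne (Ne.symm hw)
    have : T.Adj v (p.getVert 1) := p.adj_snd hnil
    have := (T.degree_pos_iff_exists_adj v).mpr ⟨_, this⟩
    omega
  have h2d : ∀ v, 2 ≤ T.degree v := by
    intro v
    have := hpos v; have := hc v; omega
  have hsum := T.sum_degrees_eq_twice_card_edges
  have hcard : T.edgeFinset.card + 1 = Fintype.card V := hT.card_edgeFinset
  have hge : 2 * Fintype.card V ≤ ∑ v, T.degree v := by
    calc 2 * Fintype.card V = ∑ _v : V, 2 := by simp [mul_comm]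
    _ ≤ ∑ v, T.degree v := Finset.sum_le_sum (fun v _ => h2d v)
  omega

lemma walk_transfer {V : Type*} {G : SimpleGraph V} {s : Set V} :
    ∀ {u v : V} (p : G.Walk u v) (hp : ∀ z ∈ p.support, z ∈ s),
      (G.induce s).Reachable ⟨u, hp u p.start_mem_support⟩ ⟨v, hp v p.end_mem_support⟩ := by
  intro u v p
  induction p with
  | nil => intro hp; rfl
  | @cons u' w' v' h q ih =>
    intro hp
    have hq : ∀ z ∈ q.support, z ∈ s := fun z hz => hp z (by simp [hz])
    have hadj : (G.induce s).Adj ⟨u', hp u' (by simp)⟩ ⟨w', hq w' q.start_mem_support⟩ := h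
    exact (hadj.reachable).trans (ih hq)

lemma tree_delete_leaf {V : Type*} [Fintype V] [DecidableEq V] {T : SimpleGraph V} {x : V}
    [DecidableRel T.Adj] (hT : T.IsTree) (hx : T.degree x = 1) :
    (T.induce {v | v ≠ x}).IsTree := by
  obtain ⟨y, hy⟩ := Finset.card_eq_one.mp hx
  have hxy : T.Adj x y := (T.mem_neighborFinset x y).mp (by rw [hy]; simp)
  have huniq : ∀ a b, T.Adj x a → T.Adj x b → a = b := by
    intro a b ha hb
    have ha' : a ∈ T.neighborFinset x := (T.mem_neighborFinset x a).mpr ha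
    have hb' : b ∈ T.neighborFinset x := (T.mem_neighborFinset x b).mpr hb
    rw [hy, Finset.mem_singleton] at ha' hb'
    rw [ha', hb']
  have hne : Nonempty ↥{v : V | v ≠ x} := ⟨⟨y, hxy.ne'⟩⟩
  have hpre : (T.induce {v | v ≠ x}).Preconnected := by
    intro a b
    obtain ⟨p⟩ := hT.isConnected.preconnected a.val b.val
    let p' := p.toPath
    have hsup : ∀ z ∈ (p' : T.Walk a.val b.val).support, z ∈ {v | v ≠ x} := by
      intro z hz
      simp only [Set.mem_setOf_eq]
      rintro rfl
      obtain ⟨c, d, hcd, hc, hd⟩ := internal_two_nbrs _ p'.2 hz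
        (fun h => a.2 h.symm) (fun h => b.2 h.symm)
      exact hcd (huniq c d hc hd)
    have := walk_transfer _ hsup
    exact this
  have hac : (T.induce {v | v ≠ x}).IsAcyclic := by
    intro a c hc
    exact hT.IsAcyclic _ (hc.map (f := (SimpleGraph.Embedding.induce {v | v ≠ x}).toHom)
      Subtype.val_injective)
  exact ⟨@SimpleGraph.Connected.mk _ _ hpre hne, hac⟩

lemma tree_embeds (n : ℕ) :
    ∀ {V W : Type} [Fintype V] [Fintype W] [Nonempty W] (T : SimpleGraph V)
      (_ : T.IsTree) (_ : Fintype.card V = n) (R : SimpleGraph W) [DecidableRel R.Adj]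
      (_ : ∀ w : W, n - 1 ≤ R.degree w), graphEmbeds T R := by
  induction n with
  | zero =>
    intro V W _ _ _ T hT hc R _ hdeg
    exact absurd (Fintype.card_pos_iff.mpr hT.isConnected.nonempty) (by omega)
  | succ k ih =>
    intro V W _ _ _ T hT hc R _ hdeg
    classical
    rcases Nat.eq_zero_or_pos k with hk | hk
    · -- single vertex
      subst hk
      have hsub : Subsingleton V := Fintype.card_le_one_iff_subsingleton.mp (by omega)
      refine ⟨fun _ => Classical.arbitrary W, fun a b _ => Subsingleton.elim a b, ?_⟩
      intro a b hab
      exact absurd (Subsingleton.elim a b) hab.ne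
    · -- k ≥ 1
      obtain ⟨x, hx⟩ := tree_exists_leaf hT (by omega)
      obtain ⟨y, hy⟩ := Finset.card_eq_one.mp hx
      have hxy : T.Adj x y := (T.mem_neighborFinset x y).mp (by rw [hy]; simp)
      set s : Set V := {v | v ≠ x} with hs
      have hT' : (T.induce s).IsTree := tree_delete_leaf hT hx
      have hcard' : Fintype.card ↥s = k := by
        have h1 : Fintype.card ↥s = Fintype.card {v : V // ¬ v = x} := rfl
        rw [h1, Fintype.card_subtype_compl, Fintype.card_subtype_eq]
        omega
      obtain ⟨f', hinj', hhom'⟩ := ih (T.induce s) hT' hcard' R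
        (fun w => le_trans (by omega) (hdeg w))
      set y' : ↥s := ⟨y, hxy.ne'⟩ with hy'
      set used : Finset W := Finset.univ.image f' with hused
      have hcard_used : used.card = k := by
        rw [hused, Finset.card_image_of_injective _ hinj', Finset.card_univ, hcard']
      have hfy_nbr : f' y' ∉ R.neighborFinset (f' y') := by simp
      have hinter : R.neighborFinset (f' y') ∩ used ⊆ used.erase (f' y') := by
        intro w hw
        rw [Finset.mem_erase]
        exact ⟨fun he => hfy_nbr (he ▸ (Finset.mem_inter.mp hw).1), (Finset.mem_inter.mp hw).2⟩
      have hfree : (R.neighborFinset (f' y') \ used).Nonempty := by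
        rw [← Finset.card_pos]
        have h1 := Finset.card_inter_add_card_sdiff (R.neighborFinset (f' y')) used
        have h2 : (R.neighborFinset (f' y') ∩ used).card ≤ k - 1 := by
          calc _ ≤ (used.erase (f' y')).card := Finset.card_le_card hinter
          _ ≤ used.card - 1 := by
            rw [Finset.card_erase_of_mem (by simp [hused])]
          _ = k - 1 := by rw [hcard_used]
        have h3 : k ≤ (R.neighborFinset (f' y')).card := by
          have := hdeg (f' y')
          have he : R.degree (f' y') = (R.neighborFinset (f' y')).card := rfl
          omega
        omega
      obtain ⟨w0, hw0⟩ := hfree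
      have hw0nbr : R.Adj (f' y') w0 := by
        have := (Finset.mem_sdiff.mp hw0).1
        rwa [SimpleGraph.mem_neighborFinset] at this
      have hw0used : w0 ∉ used := (Finset.mem_sdiff.mp hw0).2
      refine ⟨fun v => if h : v = x then w0 else f' ⟨v, h⟩, ?_, ?_⟩
      · intro a b hab
        by_cases ha : a = x <;> by_cases hb : b = x
        · rw [ha, hb]
        · simp only [dif_pos ha, dif_neg hb] at hab
          exact absurd (hab ▸ Finset.mem_image_of_mem f' (Finset.mem_univ (⟨b, hb⟩ : ↥s))) hw0used
        · simp only [dif_neg ha, dif_pos hb] at hab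
          exact absurd (hab ▸ Finset.mem_image_of_mem f' (Finset.mem_univ (⟨a, ha⟩ : ↥s))) hw0used
        · simp only [dif_neg ha, dif_neg hb] at hab
          simpa using congrArg Subtype.val (hinj' hab)
      · intro a b hab
        by_cases ha : a = x <;> by_cases hb : b = x
        · exact absurd (ha.trans hb.symm) hab.ne
        · -- a = x, so b = y
          have hb_eq : b = y := by
            have : b ∈ T.neighborFinset x := (T.mem_neighborFinset x b).mpr (ha ▸ hab)
            rw [hy, Finset.mem_singleton] at this; exact this
          simp only [dif_pos ha, dif_neg hb]
          have : (⟨b, hb⟩ : ↥s) = y' := Subtype.ext hb_eq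
          rw [this]
          exact hw0nbr.symm
        · have ha_eq : a = y := by
            have : a ∈ T.neighborFinset x := (T.mem_neighborFinset x a).mpr (hb ▸ hab.symm)
            rw [hy, Finset.mem_singleton] at this; exact this
          simp only [dif_neg ha, dif_pos hb]
          have : (⟨a, ha⟩ : ↥s) = y' := Subtype.ext ha_eq
          rw [this]
          exact hw0nbr
        · simp only [dif_neg ha, dif_neg hb]
          exact hhom' ⟨a, ha⟩ ⟨b, hb⟩ hab

lemma ramsey_core (n : ℕ) (hn : 2 ≤ n) (T : SimpleGraph (Fin n)) (hT : T.IsTree) :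
    ∀ (m : ℕ) {W : Type} [Fintype W] (R : SimpleGraph W),
      (n - 1) * (m - 1) + 1 ≤ Fintype.card W →
      graphEmbeds T R ∨ graphEmbeds (⊤ : SimpleGraph (Fin m)) Rᶜ := by
  intro m
  induction m with
  | zero =>
    intro W _ R _
    exact Or.inr ⟨Fin.elim0, fun a => a.elim0, fun a => a.elim0⟩
  | succ m ih =>
    intro W _ R hW
    classical
    rcases Nat.eq_zero_or_pos m with hm | hm
    · subst hm
      have hne : Nonempty W := Fintype.card_pos_iff.mp (by omega)
      refine Or.inr ⟨fun _ => Classical.arbitrary W, fun a b _ => Fin.ext (by omega), ?_⟩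
      intro a b hab
      exact absurd (Fin.ext (by omega) : a = b) hab.ne
    · by_contra hcon
      push_neg at hcon
      obtain ⟨h1, h2⟩ := hcon
      have hdegc : ∀ v : W, Rᶜ.degree v ≤ (n - 1) * (m - 1) := by
        intro v
        by_contra hd
        push_neg at hd
        set S := Rᶜ.neighborSet v with hS
        have hcardS : (n - 1) * (m - 1) + 1 ≤ Fintype.card ↥S := by
          rw [SimpleGraph.card_neighborSet_eq_degree]; omega
        rcases ih (R.induce S) hcardS with h | h
        · obtain ⟨f, hfi, hfh⟩ := h
          exact h1 ⟨fun i => (f i).val, Subtype.val_injective.comp hfi,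
            fun a b hab => hfh a b hab⟩
        · obtain ⟨f, hfi, hfh⟩ := h
          apply h2
          refine ⟨fun i => if h : (i : ℕ) < m then (f ⟨i, h⟩).val else v, ?_, ?_⟩
          · intro i j hij
            by_cases hi : (i : ℕ) < m <;> by_cases hj : (j : ℕ) < m
            · simp only [dif_pos hi, dif_pos hj] at hij
              have heq : (⟨(i : ℕ), hi⟩ : Fin m) = ⟨(j : ℕ), hj⟩ :=
                hfi (Subtype.val_injective hij)
              have hval := congrArg Fin.val heq
              exact Fin.ext hval
            · simp only [dif_pos hi, dif_neg hj] at hij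
              exact absurd (hij ▸ (f ⟨i, hi⟩).2) Rᶜ.notMem_neighborSet_self
            · simp only [dif_neg hi, dif_pos hj] at hij
              exact absurd (hij ▸ (f ⟨j, hj⟩).2) Rᶜ.notMem_neighborSet_self
            · exact Fin.ext (by omega)
          · intro i j hij
            replace hij : i ≠ j := hij.ne
            by_cases hi : (i : ℕ) < m <;> by_cases hj : (j : ℕ) < m
            · simp only [dif_pos hi, dif_pos hj]
              have hne : (⟨(i : ℕ), hi⟩ : Fin m) ≠ ⟨(j : ℕ), hj⟩ := by
                intro h
                have hval := congrArg Fin.val h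
                exact hij (Fin.ext hval)
              have := hfh _ _ ((SimpleGraph.top_adj _ _).mpr hne)
              rw [SimpleGraph.compl_adj] at this ⊢
              exact ⟨fun h => this.1 (Subtype.ext h), this.2⟩
            · simp only [dif_pos hi, dif_neg hj]
              exact ((Rᶜ.mem_neighborSet v _).mp (f ⟨i, hi⟩).2).symm
            · simp only [dif_neg hi, dif_pos hj]
              exact (Rᶜ.mem_neighborSet v _).mp (f ⟨j, hj⟩).2
            · exact absurd (Fin.ext (by omega)) hij
      have hne : Nonempty W := Fintype.card_pos_iff.mp (by omega)
      have hmul : (n - 1) * (m + 1 - 1) = (n - 1) * (m - 1) + (n - 1) := by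
        obtain ⟨m', rfl⟩ := Nat.exists_eq_succ_of_ne_zero (by omega : m ≠ 0)
        simp [Nat.mul_succ]
      have hdegR : ∀ w : W, n - 1 ≤ R.degree w := by
        intro w
        have hc := SimpleGraph.degree_compl (G := R) (v := w)
        have := hdegc w
        generalize hp : (n - 1) * (m - 1) = p at *
        rw [hmul] at hW
        omega
      exact h1 (tree_embeds n T hT (by simp) R hdegR)

lemma lower_bound (n m N : ℕ) (hn : 2 ≤ n) (hm : 2 ≤ m) (hN : N ≤ (n - 1) * (m - 1))
    (T : SimpleGraph (Fin n)) (hT : T.IsTree) :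
    ¬ isRamsey T (⊤ : SimpleGraph (Fin m)) N := by
  classical
  intro hR
  set q := n - 1 with hq
  have hq0 : 0 < q := by omega
  set R : SimpleGraph (Fin N) :=
    SimpleGraph.fromRel (fun x y => (x : ℕ) / q = (y : ℕ) / q) with hRdef
  have hRadj : ∀ x y : Fin N, R.Adj x y ↔ x ≠ y ∧ (x : ℕ) / q = (y : ℕ) / q := by
    intro x y
    rw [hRdef, SimpleGraph.fromRel_adj]
    constructor
    · rintro ⟨h1, h2 | h2⟩
      · exact ⟨h1, h2⟩
      · exact ⟨h1, h2.symm⟩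
    · rintro ⟨h1, h2⟩; exact ⟨h1, Or.inl h2⟩
  rcases hR R with h | h
  · obtain ⟨f, hfi, hfh⟩ := h
    have hdiv : ∀ {u v : Fin n} (p : T.Walk u v), ((f u : Fin N) : ℕ) / q = ((f v : Fin N) : ℕ) / q := by
      intro u v p
      induction p with
      | nil => rfl
      | cons h p ih =>
        have := ((hRadj _ _).mp (hfh _ _ h)).2
        exact this.trans ih
    have hne : Nonempty (Fin n) := ⟨⟨0, by omega⟩⟩
    obtain ⟨u0⟩ := hne
    set c := ((f u0 : Fin N) : ℕ) / q with hc
    have hall : ∀ u : Fin n, ((f u : Fin N) : ℕ) / q = c := by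
      intro u
      obtain ⟨p⟩ := hT.isConnected.preconnected u u0
      exact hdiv p
    -- injective map from Fin n into the block of size ≤ q
    have hcard : (Finset.univ.filter (fun w : Fin N => (w : ℕ) / q = c)).card ≤ q := by
      have : ∀ w ∈ Finset.univ.filter (fun w : Fin N => (w : ℕ) / q = c),
          (w : ℕ) % q ∈ Finset.range q := by
        intro w _
        exact Finset.mem_range.mpr (Nat.mod_lt _ hq0)
      refine le_trans (Finset.card_le_card_of_injOn (fun w => (w : ℕ) % q) this ?_) (by simp)
      intro w1 hw1 w2 hw2 hmod
      simp only [Finset.mem_coe, Finset.mem_filter] at hw1 hw2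
      have hmod' : (w1 : ℕ) % q = (w2 : ℕ) % q := hmod
      have e1 : (w1 : ℕ) = q * c + (w1 : ℕ) % q := by
        conv_lhs => rw [← Nat.div_add_mod (w1 : ℕ) q]
        rw [hw1.2]
      have e2 : (w2 : ℕ) = q * c + (w2 : ℕ) % q := by
        conv_lhs => rw [← Nat.div_add_mod (w2 : ℕ) q]
        rw [hw2.2]
      exact Fin.ext (by rw [e1, e2, hmod'])
    have : Fintype.card (Fin n) ≤ (Finset.univ.filter (fun w : Fin N => (w : ℕ) / q = c)).card := by
      apply Finset.card_le_card_of_injOn f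
      · intro u _
        exact Finset.mem_filter.mpr ⟨Finset.mem_univ _, hall u⟩
      · intro a _ b _ hab; exact hfi hab
    simp only [Fintype.card_fin] at this
    omega
  · obtain ⟨f, hfi, hfh⟩ := h
    have hdiff : ∀ i j : Fin m, i ≠ j → ((f i : Fin N) : ℕ) / q ≠ ((f j : Fin N) : ℕ) / q := by
      intro i j hij
      have := hfh i j ((SimpleGraph.top_adj _ _).mpr hij)
      rw [SimpleGraph.compl_adj, hRadj] at this
      intro hdd
      exact this.2 ⟨this.1, hdd⟩
    have hlt : ∀ i : Fin m, ((f i : Fin N) : ℕ) / q < m - 1 := by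
      intro i
      have hfin : ((f i : Fin N) : ℕ) < N := (f i).isLt
      have : ((f i : Fin N) : ℕ) < (m - 1) * q := by
        calc ((f i : Fin N) : ℕ) < N := hfin
        _ ≤ q * (m - 1) := hN
        _ = (m - 1) * q := by ring
      exact Nat.div_lt_of_lt_mul (by rwa [mul_comm] at this)
    have : Fintype.card (Fin m) ≤ (Finset.range (m - 1)).card := by
      apply Finset.card_le_card_of_injOn (fun i => ((f i : Fin N) : ℕ) / q)
      · intro i _; exact Finset.mem_range.mpr (hlt i)
      · intro a _ b _ hab
        by_contra hne
        exact hdiff a b hne hab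
    simp only [Fintype.card_fin, Finset.card_range] at this
    omega

/-- Chvátal: every tree on `n ≥ 2` vertices is `K_m`-good for `m ≥ 2`. -/
theorem stmt_1 (n m : ℕ) (hn : 2 ≤ n) (hm : 2 ≤ m)
    (T : SimpleGraph (Fin n)) (hT : T.IsTree) :
    ramsey T (⊤ : SimpleGraph (Fin m)) = (n - 1) * (m - 1) + 1 := by
  have hmem : isRamsey T (⊤ : SimpleGraph (Fin m)) ((n - 1) * (m - 1) + 1) := by
    intro R
    exact ramsey_core n hn T hT m R (by simp)
  apply le_antisymm
  · exact Nat.sInf_le hmem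
  · apply le_csInf ⟨_, hmem⟩
    intro N hNmem
    by_contra hlt
    push_neg at hlt
    exact lower_bound n m N hn hm (by omega) T hT hNmem
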